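/- arXiv:2001.07794 — 2 statements merged into one kernel-verified Lean document; each statement's English description precedes it below -/
import Mathlib

section
/- Let E be a measurable space, κ a sub-Markov kernel on E, c > 0, and η : E → (0,∞) measurable with ∫_E η(y) κ(x,dy) = c·η(x) for every x ∈ E. Let α be a probability measure on E with 0 < ∫_E η dα < ∞ such that ∫_E κ(x,A) α(dx) = c·α(A) for every measurable A ⊆ E. Then the probability measure β := η*α is invariant for the Doob transform κ̃ of κ: for every measurable A ⊆ E, ∫_E κ̃(x,A) β(dx) = β(A). -/
open MeasureTheory ProbabilityTheory ENNReal

/-- If `α` is a quasi-stationary distribution for the sub-Markov kernel `κ` with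
eigenvalue `c` and `η` is the associated positive right eigenfunction, then
`β = η*α` is invariant for the Doob transform of `κ`. -/
theorem stmt_3 {E : Type*} [MeasurableSpace E]
    (κ : Kernel E E) (hκsub : ∀ x, κ x Set.univ ≤ 1)
    (c : ℝ≥0∞) (hc0 : 0 < c) (hc : c < ⊤)
    (η : E → ℝ≥0∞) (hηm : Measurable η)
    (hηpos : ∀ x, 0 < η x) (hηfin : ∀ x, η x < ⊤)
    (heig : ∀ x, ∫⁻ y, η y ∂(κ x) = c * η x)
    (α : Measure E) [IsProbabilityMeasure α]
    (hα0 : 0 < ∫⁻ x, η x ∂α) (hα1 : (∫⁻ x, η x ∂α) < ⊤)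
    (hqsd : ∀ A : Set E, MeasurableSet A → ∫⁻ x, κ x A ∂α = c * α A) :
    ∀ A : Set E, MeasurableSet A →
      ∫⁻ x, ((c * η x)⁻¹ • ((κ x).withDensity η)) A
          ∂((∫⁻ x, η x ∂α)⁻¹ • α.withDensity η) =
        ((∫⁻ x, η x ∂α)⁻¹ • α.withDensity η) A := by
  intro A hA
  haveI : IsFiniteKernel κ := ⟨⟨1, one_lt_top, fun x => hκsub x⟩⟩
  have hηA : Measurable (A.indicator η) := hηm.indicator hA
  -- bind of α under κ equals c • α
  have hbind : α.bind κ = c • α := by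
    ext s hs
    rw [Measure.bind_apply hs (Kernel.measurable κ).aemeasurable, Measure.smul_apply, smul_eq_mul,
      hqsd s hs]
  -- the measure of A under the Doob-like withDensity kernel
  have hwd : ∀ x : E, (κ x).withDensity η A = ∫⁻ y, A.indicator η y ∂κ x := by
    intro x
    rw [withDensity_apply _ hA, lintegral_indicator hA]
  have hM : Measurable fun x => (κ x).withDensity η A := by
    simp only [hwd]
    exact Measurable.lintegral_kernel (f := A.indicator η) hηA
  -- key exchange identity
  have key : ∫⁻ x, (κ x).withDensity η A ∂α = c * ∫⁻ y, A.indicator η y ∂α := by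
    simp only [hwd]
    rw [← Measure.lintegral_bind (Kernel.measurable κ).aemeasurable hηA.aemeasurable, hbind,
      lintegral_smul_measure, smul_eq_mul]
  have hf : Measurable fun x => (c * η x)⁻¹ * (κ x).withDensity η A :=
    ((hηm.const_mul c).inv).mul hM
  simp only [Measure.smul_apply, smul_eq_mul, lintegral_smul_measure]
  rw [lintegral_withDensity_eq_lintegral_mul α hηm hf]
  have hsimp : ∀ x : E, (η * fun x => (c * η x)⁻¹ * (κ x).withDensity η A) x
      = c⁻¹ * (κ x).withDensity η A := by
    intro x
    have h1 : (c * η x)⁻¹ = c⁻¹ * (η x)⁻¹ :=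
      ENNReal.mul_inv (Or.inl hc0.ne') (Or.inl hc.ne)
    simp only [Pi.mul_apply, h1]
    rw [show η x * (c⁻¹ * (η x)⁻¹ * (κ x).withDensity η A)
        = (η x * (η x)⁻¹) * (c⁻¹ * (κ x).withDensity η A) by ring,
      ENNReal.mul_inv_cancel (hηpos x).ne' (hηfin x).ne, one_mul]
  rw [lintegral_congr hsimp, lintegral_const_mul _ hM, key,
    ← mul_assoc c⁻¹ c, ENNReal.inv_mul_cancel hc0.ne' hc.ne, one_mul,
    withDensity_apply _ hA, ← lintegral_indicator hA]
end

section
/- Let V : (0,∞) → ℝ and η : (0,∞) → (0,∞) be twice differentiable and λ₀ a real number such that for every x > 0: (1/2)η″(x) − (1/2)V′(x)η′(x) = −λ₀ η(x), η″(x) = −4λ₀ η(x) e^{−V(x)}, and V′(x) > 0. Then for every x > 0, η′(x) = 2λ₀ η(x) (1 − 2e^{−V(x)})/V′(x), and consequently (V − 2 log η)″(x) = V″(x) + 8λ₀ e^{−V(x)} + 8λ₀² ((1 − 2e^{−V(x)})/V′(x))². -/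
open Set

/-- Under the eigenfunction ODE `(1/2)η″ − (1/2)V′η′ = −λ₀η`, the identity
`η″ = −4λ₀ η e^{−V}`, and `V′ > 0` on `(0,∞)`, one has
`η′ = 2λ₀ η (1 − 2e^{−V})/V′` and
`(V − 2 log η)″ = V″ + 8λ₀ e^{−V} + 8λ₀²((1 − 2e^{−V})/V′)²` on `(0,∞)`. -/
theorem stmt_9 (V η : ℝ → ℝ) (lam₀ : ℝ)
    (hηpos : ∀ x ∈ Set.Ioi (0:ℝ), 0 < η x)
    (hV1 : ∀ x ∈ Set.Ioi (0:ℝ), DifferentiableAt ℝ V x)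
    (hV2 : ∀ x ∈ Set.Ioi (0:ℝ), DifferentiableAt ℝ (deriv V) x)
    (hη1 : ∀ x ∈ Set.Ioi (0:ℝ), DifferentiableAt ℝ η x)
    (hη2 : ∀ x ∈ Set.Ioi (0:ℝ), DifferentiableAt ℝ (deriv η) x)
    (hode : ∀ x ∈ Set.Ioi (0:ℝ),
      (1/2) * deriv (deriv η) x - (1/2) * deriv V x * deriv η x = -lam₀ * η x)
    (hsecond : ∀ x ∈ Set.Ioi (0:ℝ),
      deriv (deriv η) x = -4 * lam₀ * η x * Real.exp (-V x))
    (hV' : ∀ x ∈ Set.Ioi (0:ℝ), 0 < deriv V x) :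
    ∀ x ∈ Set.Ioi (0:ℝ),
      deriv η x = 2 * lam₀ * η x * (1 - 2 * Real.exp (-V x)) / deriv V x ∧
      deriv (deriv fun t => V t - 2 * Real.log (η t)) x =
        deriv (deriv V) x + 8 * lam₀ * Real.exp (-V x) +
          8 * lam₀ ^ 2 * ((1 - 2 * Real.exp (-V x)) / deriv V x) ^ 2 := by
  have h1 : ∀ y ∈ Set.Ioi (0:ℝ),
      deriv η y = 2 * lam₀ * η y * (1 - 2 * Real.exp (-V y)) / deriv V y := by
    intro y hy
    have h := hode y hy
    rw [hsecond y hy] at h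
    rw [eq_div_iff (hV' y hy).ne']
    linear_combination -2 * h
  intro x hx
  have hxo : Set.Ioi (0:ℝ) ∈ nhds x := isOpen_Ioi.mem_nhds hx
  refine ⟨h1 x hx, ?_⟩
  have hfe : deriv (fun t => V t - 2 * Real.log (η t)) =ᶠ[nhds x]
      fun t => deriv V t - 2 * (deriv η t / η t) := by
    filter_upwards [hxo] with y hy
    have hηy := (hηpos y hy).ne'
    have hη := (hη1 y hy).hasDerivAt
    have hlog : HasDerivAt (fun t => Real.log (η t)) (deriv η y / η y) y := by
      simpa [div_eq_inv_mul, Function.comp_def] using (Real.hasDerivAt_log hηy).comp y hη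
    exact ((hV1 y hy).hasDerivAt.sub (hlog.const_mul 2)).deriv
  rw [hfe.deriv_eq]
  have hηx := (hηpos x hx).ne'
  have hdiv : HasDerivAt (fun t => deriv η t / η t)
      ((deriv (deriv η) x * η x - deriv η x * deriv η x) / (η x) ^ 2) x :=
    (hη2 x hx).hasDerivAt.div (hη1 x hx).hasDerivAt hηx
  have hg : HasDerivAt (fun t => deriv V t - 2 * (deriv η t / η t))
      (deriv (deriv V) x - 2 * ((deriv (deriv η) x * η x - deriv η x * deriv η x) / (η x) ^ 2)) x :=
    (hV2 x hx).hasDerivAt.sub (hdiv.const_mul 2)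
  rw [hg.deriv]
  rw [hsecond x hx, h1 x hx]
  have hvx := (hV' x hx).ne'
  field_simp
  ring
end
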